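/- Let k be an even nonzero integer and R ∈ (0,∞]. A function Q : B_R \ {0} → S_0 satisfies the k-fold SO(2)-equivariance Q(x) = R_k(ψ)ᵗ Q(P₂(R₂(ψ) x̃)) R_k(ψ) for every ψ ∈ [0,2π) and every x ∈ B_R \ {0} if and only if there exist functions w₀, w₁, w₂, w₃, w₄ : (0,R) → ℝ such that Q(x) = w₀(|x|)E₀ + w₁(|x|)E₁(x) + w₂(|x|)E₂(x) + w₃(|x|)E₃(x) + w₄(|x|)E₄(x) for every x ∈ B_R \ {0}; moreover in that case w_i(|x|) = Q(x)·E_i(x). -/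

import Mathlib

noncomputable section

open Matrix
open scoped ENNReal NNReal

namespace LdGStmt0

abbrev M3 : Type := Matrix (Fin 3) (Fin 3) ℝ

/-- The vector `e₃ = (0,0,1)`. -/
def e3 : Fin 3 → ℝ := ![0, 0, 1]

/-- `n(x) = (cos(kφ/2), sin(kφ/2), 0)` as a function of the polar angle `φ`. -/
def nvec (k : ℤ) (φ : ℝ) : Fin 3 → ℝ :=
  ![Real.cos ((k : ℝ) * φ / 2), Real.sin ((k : ℝ) * φ / 2), 0]

/-- `m(x) = (−sin(kφ/2), cos(kφ/2), 0)` as a function of the polar angle `φ`. -/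
def mvec (k : ℤ) (φ : ℝ) : Fin 3 → ℝ :=
  ![-Real.sin ((k : ℝ) * φ / 2), Real.cos ((k : ℝ) * φ / 2), 0]

/-- `I₂ = I₃ − e₃ ⊗ e₃`. -/
def I2 : M3 := 1 - vecMulVec e3 e3

/-- `E₀ = √(3/2) (e₃⊗e₃ − I₃/3)`. -/
def E0 : M3 := Real.sqrt (3 / 2) • (vecMulVec e3 e3 - (1 / 3 : ℝ) • (1 : M3))

/-- `E₁ = √2 (n⊗n − I₂/2)`. -/
def E1 (k : ℤ) (φ : ℝ) : M3 :=
  Real.sqrt 2 • (vecMulVec (nvec k φ) (nvec k φ) - (1 / 2 : ℝ) • I2)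

/-- `E₂ = (1/√2)(n⊗m + m⊗n)`. -/
def E2 (k : ℤ) (φ : ℝ) : M3 :=
  (1 / Real.sqrt 2) • (vecMulVec (nvec k φ) (mvec k φ) + vecMulVec (mvec k φ) (nvec k φ))

/-- `E₃ = (1/√2)(n⊗e₃ + e₃⊗n)`. -/
def E3m (k : ℤ) (φ : ℝ) : M3 :=
  (1 / Real.sqrt 2) • (vecMulVec (nvec k φ) e3 + vecMulVec e3 (nvec k φ))

/-- `E₄ = (1/√2)(m⊗e₃ + e₃⊗m)`. -/
def E4m (k : ℤ) (φ : ℝ) : M3 :=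
  (1 / Real.sqrt 2) • (vecMulVec (mvec k φ) e3 + vecMulVec e3 (mvec k φ))

/-- The rotation `R_k(ψ)` about `e₃` by angle `kψ/2`. -/
def Rk (k : ℤ) (ψ : ℝ) : M3 :=
  !![Real.cos ((k : ℝ) * ψ / 2), -Real.sin ((k : ℝ) * ψ / 2), 0;
     Real.sin ((k : ℝ) * ψ / 2),  Real.cos ((k : ℝ) * ψ / 2), 0;
     0, 0, 1]

/-- `x̃ = (x₁, x₂, 0)`, identifying the plane with `ℂ`. -/
def toR3 (x : ℂ) : Fin 3 → ℝ := ![x.re, x.im, 0]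

/-- `P₂(x₁,x₂,x₃) = (x₁,x₂)`, identifying the plane with `ℂ`. -/
def P2 (v : Fin 3 → ℝ) : ℂ := (v 0 : ℂ) + (v 1 : ℂ) * Complex.I

lemma vmv_conj (M : M3) (u v : Fin 3 → ℝ) :
    M * vecMulVec u v * Mᵀ = vecMulVec (M *ᵥ u) (M *ᵥ v) := by
  ext i j
  simp [Matrix.mul_apply, vecMulVec_apply, Matrix.mulVec, dotProduct,
    Fin.sum_univ_three, Matrix.transpose_apply]
  ring

lemma Rk_mulVec_nvec (k : ℤ) (ψ φ : ℝ) :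
    Rk k ψ *ᵥ nvec k φ = nvec k (φ + ψ) := by
  have h : (k : ℝ) * (φ + ψ) / 2 = (k : ℝ) * φ / 2 + (k : ℝ) * ψ / 2 := by ring
  ext i
  fin_cases i <;>
    simp [Rk, nvec, Matrix.mulVec, dotProduct, Fin.sum_univ_three, h,
      Real.cos_add, Real.sin_add] <;> ring

lemma Rk_mulVec_mvec (k : ℤ) (ψ φ : ℝ) :
    Rk k ψ *ᵥ mvec k φ = mvec k (φ + ψ) := by
  have h : (k : ℝ) * (φ + ψ) / 2 = (k : ℝ) * φ / 2 + (k : ℝ) * ψ / 2 := by ring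
  ext i
  fin_cases i <;>
    simp [Rk, mvec, Matrix.mulVec, dotProduct, Fin.sum_univ_three, h,
      Real.cos_add, Real.sin_add] <;> ring

lemma Rk_mulVec_e3 (k : ℤ) (ψ : ℝ) : Rk k ψ *ᵥ e3 = e3 := by
  ext i
  fin_cases i <;>
    simp [Rk, e3, Matrix.mulVec, dotProduct, Fin.sum_univ_three]

lemma transpose_Rk (k : ℤ) (ψ : ℝ) : (Rk k ψ)ᵀ = Rk k (-ψ) := by
  ext i j
  fin_cases i <;> fin_cases j <;>
    simp [Rk, Matrix.transpose_apply, mul_neg, neg_div, Real.cos_neg, Real.sin_neg]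

lemma Rk_mul_transpose (k : ℤ) (ψ : ℝ) : Rk k ψ * (Rk k ψ)ᵀ = 1 := by
  rw [transpose_Rk]
  have hcs := Real.sin_sq_add_cos_sq ((k : ℝ) * ψ / 2)
  ext i j
  fin_cases i <;> fin_cases j <;>
    simp [Rk, Matrix.mul_apply, Fin.sum_univ_three, Matrix.one_apply, mul_neg, neg_div,
      Real.cos_neg, Real.sin_neg, Fin.ext_iff] <;>
    ring_nf <;> (ring_nf at hcs; linarith)

lemma transpose_mul_Rk (k : ℤ) (ψ : ℝ) : (Rk k ψ)ᵀ * Rk k ψ = 1 := by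
  rw [transpose_Rk]
  have hcs := Real.sin_sq_add_cos_sq ((k : ℝ) * ψ / 2)
  ext i j
  fin_cases i <;> fin_cases j <;>
    simp [Rk, Matrix.mul_apply, Fin.sum_univ_three, Matrix.one_apply, mul_neg, neg_div,
      Real.cos_neg, Real.sin_neg, Fin.ext_iff] <;>
    ring_nf <;> (ring_nf at hcs; linarith)
lemma Rk_conj_one (k : ℤ) (ψ : ℝ) : Rk k ψ * (1 : M3) * (Rk k ψ)ᵀ = 1 := by
  rw [mul_one, Rk_mul_transpose]

lemma Rk_conj_I2 (k : ℤ) (ψ : ℝ) : Rk k ψ * I2 * (Rk k ψ)ᵀ = I2 := by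
  simp only [I2, Matrix.mul_sub, Matrix.sub_mul, mul_one, Matrix.one_mul]
  rw [Rk_mul_transpose, vmv_conj, Rk_mulVec_e3]

lemma conj_E0 (k : ℤ) (ψ : ℝ) : Rk k ψ * E0 * (Rk k ψ)ᵀ = E0 := by
  simp only [E0, Matrix.mul_smul, Matrix.smul_mul, Matrix.mul_sub, Matrix.sub_mul, mul_one,
    Matrix.one_mul]
  rw [Rk_mul_transpose, vmv_conj, Rk_mulVec_e3]

lemma conj_E1 (k : ℤ) (ψ φ : ℝ) : Rk k ψ * E1 k φ * (Rk k ψ)ᵀ = E1 k (φ + ψ) := by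
  simp only [E1, Matrix.mul_smul, Matrix.smul_mul, Matrix.mul_sub, Matrix.sub_mul]
  rw [vmv_conj, Rk_mulVec_nvec, Rk_conj_I2]

lemma conj_E2 (k : ℤ) (ψ φ : ℝ) : Rk k ψ * E2 k φ * (Rk k ψ)ᵀ = E2 k (φ + ψ) := by
  simp only [E2, Matrix.mul_smul, Matrix.smul_mul, Matrix.mul_add, Matrix.add_mul]
  rw [vmv_conj, vmv_conj, Rk_mulVec_nvec, Rk_mulVec_mvec]

lemma conj_E3 (k : ℤ) (ψ φ : ℝ) : Rk k ψ * E3m k φ * (Rk k ψ)ᵀ = E3m k (φ + ψ) := by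
  simp only [E3m, Matrix.mul_smul, Matrix.smul_mul, Matrix.mul_add, Matrix.add_mul]
  rw [vmv_conj, vmv_conj, Rk_mulVec_nvec, Rk_mulVec_e3]

lemma conj_E4 (k : ℤ) (ψ φ : ℝ) : Rk k ψ * E4m k φ * (Rk k ψ)ᵀ = E4m k (φ + ψ) := by
  simp only [E4m, Matrix.mul_smul, Matrix.smul_mul, Matrix.mul_add, Matrix.add_mul]
  rw [vmv_conj, vmv_conj, Rk_mulVec_mvec, Rk_mulVec_e3]

lemma nvec_per (k : ℤ) (hke : Even k) (φ : ℝ) : nvec k (φ + 2 * Real.pi) = nvec k φ := by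
  obtain ⟨m, hm⟩ := hke
  have hk : (k : ℝ) = (m : ℝ) + (m : ℝ) := by exact_mod_cast congrArg (Int.cast : ℤ → ℝ) hm
  have h : (k : ℝ) * (φ + 2 * Real.pi) / 2 = (k : ℝ) * φ / 2 + (m : ℝ) * (2 * Real.pi) := by
    rw [hk]; ring
  have hc := Real.cos_add_int_mul_two_pi ((k : ℝ) * φ / 2) m
  have hs := Real.sin_add_int_mul_two_pi ((k : ℝ) * φ / 2) m
  unfold nvec
  rw [h]
  push_cast at hc hs ⊢
  rw [hc, hs]

lemma mvec_per (k : ℤ) (hke : Even k) (φ : ℝ) : mvec k (φ + 2 * Real.pi) = mvec k φ := by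
  obtain ⟨m, hm⟩ := hke
  have hk : (k : ℝ) = (m : ℝ) + (m : ℝ) := by exact_mod_cast congrArg (Int.cast : ℤ → ℝ) hm
  have h : (k : ℝ) * (φ + 2 * Real.pi) / 2 = (k : ℝ) * φ / 2 + (m : ℝ) * (2 * Real.pi) := by
    rw [hk]; ring
  have hc := Real.cos_add_int_mul_two_pi ((k : ℝ) * φ / 2) m
  have hs := Real.sin_add_int_mul_two_pi ((k : ℝ) * φ / 2) m
  unfold mvec
  rw [h]
  push_cast at hc hs ⊢
  rw [hc, hs]

lemma E1_per (k : ℤ) (hke : Even k) (φ : ℝ) : E1 k (φ + 2 * Real.pi) = E1 k φ := by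
  unfold E1; rw [nvec_per k hke]

lemma E2_per (k : ℤ) (hke : Even k) (φ : ℝ) : E2 k (φ + 2 * Real.pi) = E2 k φ := by
  unfold E2; rw [nvec_per k hke, mvec_per k hke]

lemma E3_per (k : ℤ) (hke : Even k) (φ : ℝ) : E3m k (φ + 2 * Real.pi) = E3m k φ := by
  unfold E3m; rw [nvec_per k hke]

lemma E4_per (k : ℤ) (hke : Even k) (φ : ℝ) : E4m k (φ + 2 * Real.pi) = E4m k φ := by
  unfold E4m; rw [mvec_per k hke]
lemma E0_eq : E0 = Real.sqrt (3 / 2) • !![(-1 : ℝ)/3, 0, 0; 0, -1/3, 0; 0, 0, 2/3] := by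
  ext i j
  fin_cases i <;> fin_cases j <;>
    simp [E0, e3, Matrix.vecMulVec_apply, Matrix.one_apply, Matrix.smul_apply, Matrix.vecHead, Matrix.vecTail] <;> norm_num

lemma E1_eq (k : ℤ) : E1 k 0 = Real.sqrt 2 • !![(1 : ℝ)/2, 0, 0; 0, -1/2, 0; 0, 0, 0] := by
  ext i j
  fin_cases i <;> fin_cases j <;>
    simp [E1, I2, nvec, e3, Matrix.vecMulVec_apply, Matrix.one_apply, Matrix.smul_apply,
      Matrix.sub_apply, Matrix.vecHead, Matrix.vecTail] <;> norm_num

lemma E2_eq (k : ℤ) : E2 k 0 = (Real.sqrt 2 / 2) • !![(0 : ℝ), 1, 0; 1, 0, 0; 0, 0, 0] := by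
  have hb0 : Real.sqrt 2 ≠ 0 := by positivity
  have hb : Real.sqrt 2 * Real.sqrt 2 = 2 := Real.mul_self_sqrt (by norm_num)
  have hinv : (1 : ℝ) / Real.sqrt 2 = Real.sqrt 2 / 2 := by
    rw [one_div, eq_div_iff (two_ne_zero), inv_mul_eq_div, div_eq_iff hb0, hb]
  ext i j
  fin_cases i <;> fin_cases j <;>
    simp [E2, nvec, mvec, Matrix.vecMulVec_apply, Matrix.smul_apply, Matrix.add_apply, hinv, Matrix.vecHead, Matrix.vecTail]

lemma E3_eq (k : ℤ) : E3m k 0 = (Real.sqrt 2 / 2) • !![(0 : ℝ), 0, 1; 0, 0, 0; 1, 0, 0] := by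
  have hb0 : Real.sqrt 2 ≠ 0 := by positivity
  have hb : Real.sqrt 2 * Real.sqrt 2 = 2 := Real.mul_self_sqrt (by norm_num)
  have hinv : (1 : ℝ) / Real.sqrt 2 = Real.sqrt 2 / 2 := by
    rw [one_div, eq_div_iff (two_ne_zero), inv_mul_eq_div, div_eq_iff hb0, hb]
  ext i j
  fin_cases i <;> fin_cases j <;>
    simp [E3m, nvec, e3, Matrix.vecMulVec_apply, Matrix.smul_apply, Matrix.add_apply, hinv, Matrix.vecHead, Matrix.vecTail]

lemma E4_eq (k : ℤ) : E4m k 0 = (Real.sqrt 2 / 2) • !![(0 : ℝ), 0, 0; 0, 0, 1; 0, 1, 0] := by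
  have hb0 : Real.sqrt 2 ≠ 0 := by positivity
  have hb : Real.sqrt 2 * Real.sqrt 2 = 2 := Real.mul_self_sqrt (by norm_num)
  have hinv : (1 : ℝ) / Real.sqrt 2 = Real.sqrt 2 / 2 := by
    rw [one_div, eq_div_iff (two_ne_zero), inv_mul_eq_div, div_eq_iff hb0, hb]
  ext i j
  fin_cases i <;> fin_cases j <;>
    simp [E4m, mvec, e3, Matrix.vecMulVec_apply, Matrix.smul_apply, Matrix.add_apply, hinv, Matrix.vecHead, Matrix.vecTail]

lemma expand0 (k : ℤ) (A : M3) (hA : Aᵀ = A) (htr : A.trace = 0) :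
    A = (A * E0).trace • E0 + (A * E1 k 0).trace • E1 k 0 + (A * E2 k 0).trace • E2 k 0
        + (A * E3m k 0).trace • E3m k 0 + (A * E4m k 0).trace • E4m k 0 := by
  have h10 : A 1 0 = A 0 1 := congrFun (congrFun hA 0) 1
  have h20 : A 2 0 = A 0 2 := congrFun (congrFun hA 0) 2
  have h21 : A 2 1 = A 1 2 := congrFun (congrFun hA 1) 2
  have htr' : A 0 0 + A 1 1 + A 2 2 = 0 := by simpa [Matrix.trace_fin_three] using htr
  have ha : Real.sqrt (3 / 2) * Real.sqrt (3 / 2) = 3 / 2 := Real.mul_self_sqrt (by norm_num)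
  have hb : Real.sqrt 2 * Real.sqrt 2 = 2 := Real.mul_self_sqrt (by norm_num)
  have w0 : (A * E0).trace
      = Real.sqrt (3 / 2) * (2 / 3 * A 2 2 - 1 / 3 * A 0 0 - 1 / 3 * A 1 1) := by
    rw [E0_eq]
    simp only [Matrix.trace_fin_three, Matrix.mul_apply, Fin.sum_univ_three,
      Matrix.smul_apply, smul_eq_mul, Matrix.of_apply, Matrix.cons_val', Matrix.cons_val_zero,
      Matrix.cons_val_one, Matrix.head_cons, Matrix.empty_val', Matrix.cons_val_fin_one,
      Matrix.head_fin_const, Matrix.cons_val_two, Matrix.cons_val_succ, Matrix.tail_cons, Matrix.vecHead,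
      Matrix.vecTail, Function.comp]
    ring
  have w1 : (A * E1 k 0).trace = Real.sqrt 2 * (1 / 2 * A 0 0 - 1 / 2 * A 1 1) := by
    rw [E1_eq]
    simp only [Matrix.trace_fin_three, Matrix.mul_apply, Fin.sum_univ_three,
      Matrix.smul_apply, smul_eq_mul, Matrix.of_apply, Matrix.cons_val', Matrix.cons_val_zero,
      Matrix.cons_val_one, Matrix.head_cons, Matrix.empty_val', Matrix.cons_val_fin_one,
      Matrix.head_fin_const, Matrix.cons_val_two, Matrix.cons_val_succ, Matrix.tail_cons, Matrix.vecHead,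
      Matrix.vecTail, Function.comp]
    ring
  have w2 : (A * E2 k 0).trace = Real.sqrt 2 / 2 * (A 0 1 + A 1 0) := by
    rw [E2_eq]
    simp only [Matrix.trace_fin_three, Matrix.mul_apply, Fin.sum_univ_three,
      Matrix.smul_apply, smul_eq_mul, Matrix.of_apply, Matrix.cons_val', Matrix.cons_val_zero,
      Matrix.cons_val_one, Matrix.head_cons, Matrix.empty_val', Matrix.cons_val_fin_one,
      Matrix.head_fin_const, Matrix.cons_val_two, Matrix.cons_val_succ, Matrix.tail_cons, Matrix.vecHead,
      Matrix.vecTail, Function.comp]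
    ring
  have w3 : (A * E3m k 0).trace = Real.sqrt 2 / 2 * (A 0 2 + A 2 0) := by
    rw [E3_eq]
    simp only [Matrix.trace_fin_three, Matrix.mul_apply, Fin.sum_univ_three,
      Matrix.smul_apply, smul_eq_mul, Matrix.of_apply, Matrix.cons_val', Matrix.cons_val_zero,
      Matrix.cons_val_one, Matrix.head_cons, Matrix.empty_val', Matrix.cons_val_fin_one,
      Matrix.head_fin_const, Matrix.cons_val_two, Matrix.cons_val_succ, Matrix.tail_cons, Matrix.vecHead,
      Matrix.vecTail, Function.comp]
    ring
  have w4 : (A * E4m k 0).trace = Real.sqrt 2 / 2 * (A 1 2 + A 2 1) := by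
    rw [E4_eq]
    simp only [Matrix.trace_fin_three, Matrix.mul_apply, Fin.sum_univ_three,
      Matrix.smul_apply, smul_eq_mul, Matrix.of_apply, Matrix.cons_val', Matrix.cons_val_zero,
      Matrix.cons_val_one, Matrix.head_cons, Matrix.empty_val', Matrix.cons_val_fin_one,
      Matrix.head_fin_const, Matrix.cons_val_two, Matrix.cons_val_succ, Matrix.tail_cons, Matrix.vecHead,
      Matrix.vecTail, Function.comp]
    ring
  rw [w0, w1, w2, w3, w4, E0_eq, E1_eq, E2_eq, E3_eq, E4_eq]
  ext i j
  fin_cases i <;> fin_cases j <;>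
    simp only [Matrix.smul_apply, Matrix.add_apply, smul_eq_mul, Matrix.of_apply, Matrix.cons_val',
      Matrix.cons_val_zero, Matrix.cons_val_one, Matrix.head_cons, Matrix.empty_val',
      Matrix.cons_val_fin_one, Matrix.head_fin_const, Matrix.cons_val_two, Matrix.cons_val_succ, Matrix.tail_cons,
      Matrix.vecHead, Matrix.vecTail, Function.comp, Fin.zero_eta, Fin.mk_one, Fin.reduceFinMk]
  · linear_combination (-(A 0 0 + A 1 1 - 2 * A 2 2) / 9) * ha + (-(A 0 0 - A 1 1) / 4) * hb
      + (1 / 3) * htr'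
  · linear_combination (-(A 0 1 + A 1 0) / 4) * hb + (-1 / 2) * h10
  · linear_combination (-(A 0 2 + A 2 0) / 4) * hb + (-1 / 2) * h20
  · linear_combination (-(A 0 1 + A 1 0) / 4) * hb + (1 / 2) * h10
  · linear_combination (-(A 0 0 + A 1 1 - 2 * A 2 2) / 9) * ha + ((A 0 0 - A 1 1) / 4) * hb
      + (1 / 3) * htr'
  · linear_combination (-(A 1 2 + A 2 1) / 4) * hb + (-1 / 2) * h21
  · linear_combination (-(A 0 2 + A 2 0) / 4) * hb + (1 / 2) * h20
  · linear_combination (-(A 1 2 + A 2 1) / 4) * hb + (1 / 2) * h21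
  · linear_combination ((A 0 0 + A 1 1 - 2 * A 2 2) * 2 / 9) * ha + (1 / 3) * htr'
lemma trace_conj (k : ℤ) (ψ : ℝ) (A B : M3) :
    ((Rk k ψ * A * (Rk k ψ)ᵀ) * (Rk k ψ * B * (Rk k ψ)ᵀ)).trace = (A * B).trace := by
  have h1 : (Rk k ψ)ᵀ * Rk k ψ = 1 := transpose_mul_Rk k ψ
  have h1' : ∀ X : M3, (Rk k ψ)ᵀ * (Rk k ψ * X) = X := fun X => by
    rw [← Matrix.mul_assoc, h1, Matrix.one_mul]
  have e : (Rk k ψ * A * (Rk k ψ)ᵀ) * (Rk k ψ * B * (Rk k ψ)ᵀ)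
      = Rk k ψ * (A * B * (Rk k ψ)ᵀ) := by
    simp only [Matrix.mul_assoc, h1']
  rw [e, Matrix.trace_mul_comm, Matrix.mul_assoc, h1, Matrix.mul_one]

lemma conj_lincomb (k : ℤ) (ψ φ w0 w1 w2 w3 w4 : ℝ) :
    Rk k ψ * (w0 • E0 + w1 • E1 k φ + w2 • E2 k φ + w3 • E3m k φ + w4 • E4m k φ) * (Rk k ψ)ᵀ
      = w0 • E0 + w1 • E1 k (φ + ψ) + w2 • E2 k (φ + ψ) + w3 • E3m k (φ + ψ)
        + w4 • E4m k (φ + ψ) := by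
  simp only [Matrix.mul_add, Matrix.add_mul, Matrix.mul_smul, Matrix.smul_mul]
  rw [conj_E0, conj_E1, conj_E2, conj_E3, conj_E4]

lemma master (k : ℤ) (A : M3) (hA : Aᵀ = A) (htr : A.trace = 0) (θ : ℝ) :
    Rk k θ * A * (Rk k θ)ᵀ
      = (A * E0).trace • E0 + (A * E1 k 0).trace • E1 k θ + (A * E2 k 0).trace • E2 k θ
        + (A * E3m k 0).trace • E3m k θ + (A * E4m k 0).trace • E4m k θ := by
  conv_lhs => rw [expand0 k A hA htr]
  rw [conj_lincomb]
  simp only [zero_add]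

lemma P2_rot (ψ : ℝ) (x : ℂ) :
    P2 ((Rk 2 ψ).mulVec (toR3 x)) = Complex.exp ((ψ : ℂ) * Complex.I) * x := by
  have h2 : ((2 : ℤ) : ℝ) * ψ / 2 = ψ := by push_cast; ring
  apply Complex.ext <;>
    simp [P2, Rk, toR3, Matrix.mulVec, dotProduct, Fin.sum_univ_three, h2,
      Complex.exp_mul_I, Complex.ext_iff, Complex.add_re, Complex.add_im, Complex.mul_re,
      Complex.mul_im, Complex.cos_ofReal_re, Complex.sin_ofReal_re] <;>
    ring

lemma norm_pt (r φ : ℝ) (hr : 0 < r) : ‖(r : ℂ) * Complex.exp ((φ : ℂ) * Complex.I)‖ = r := by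
  rw [norm_mul, Complex.norm_exp_ofReal_mul_I,
    Complex.norm_real, Real.norm_eq_abs, abs_of_pos hr, mul_one]

/-- A map `Q : B_R \ {0} → S₀` (with `k` even and nonzero, `R ∈ (0,∞]`) is
`k`-fold `SO(2)`-equivariant iff it has the form
`Q = w₀(r)E₀ + w₁(r)E₁ + w₂(r)E₂ + w₃(r)E₃ + w₄(r)E₄`, in which case `wᵢ(|x|) = Q(x)·Eᵢ(x)`. -/
theorem stmt_0 (k : ℤ) (hk : k ≠ 0) (hke : Even k) (R : ℝ≥0∞) (hR : 0 < R)
    (Q : ℂ → M3)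
    (hsymm : ∀ x : ℂ, x ≠ 0 → (‖x‖₊ : ℝ≥0∞) < R → (Q x)ᵀ = Q x)
    (htr : ∀ x : ℂ, x ≠ 0 → (‖x‖₊ : ℝ≥0∞) < R → (Q x).trace = 0) :
    (∀ ψ ∈ Set.Ico (0 : ℝ) (2 * Real.pi), ∀ x : ℂ, x ≠ 0 → (‖x‖₊ : ℝ≥0∞) < R →
        Q x = (Rk k ψ)ᵀ * Q (P2 ((Rk 2 ψ).mulVec (toR3 x))) * Rk k ψ)
      ↔ ∃ w₀ w₁ w₂ w₃ w₄ : ℝ → ℝ,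
          ∀ r φ : ℝ, 0 < r → ENNReal.ofReal r < R → φ ∈ Set.Ico (0 : ℝ) (2 * Real.pi) →
            Q ((r : ℂ) * Complex.exp ((φ : ℂ) * Complex.I)) =
                w₀ r • E0 + w₁ r • E1 k φ + w₂ r • E2 k φ + w₃ r • E3m k φ + w₄ r • E4m k φ
              ∧ w₀ r = (Q ((r : ℂ) * Complex.exp ((φ : ℂ) * Complex.I)) * E0).trace
              ∧ w₁ r = (Q ((r : ℂ) * Complex.exp ((φ : ℂ) * Complex.I)) * E1 k φ).trace
              ∧ w₂ r = (Q ((r : ℂ) * Complex.exp ((φ : ℂ) * Complex.I)) * E2 k φ).trace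
              ∧ w₃ r = (Q ((r : ℂ) * Complex.exp ((φ : ℂ) * Complex.I)) * E3m k φ).trace
              ∧ w₄ r = (Q ((r : ℂ) * Complex.exp ((φ : ℂ) * Complex.I)) * E4m k φ).trace := by
  constructor
  · intro h
    refine ⟨fun r => (Q r * E0).trace, fun r => (Q r * E1 k 0).trace,
            fun r => (Q r * E2 k 0).trace, fun r => (Q r * E3m k 0).trace,
            fun r => (Q r * E4m k 0).trace, ?_⟩
    intro r φ hr hrR hφ
    have hrc0 : (r : ℂ) ≠ 0 := by
      simpa using ne_of_gt hr
    have hx0 : (r : ℂ) * Complex.exp ((φ : ℂ) * Complex.I) ≠ 0 :=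
      mul_ne_zero hrc0 (Complex.exp_ne_zero _)
    have hnx : ‖(r : ℂ) * Complex.exp ((φ : ℂ) * Complex.I)‖ = r := norm_pt r φ hr
    have hxR : (‖(r : ℂ) * Complex.exp ((φ : ℂ) * Complex.I)‖₊ : ℝ≥0∞) < R := by
      rw [← enorm_eq_nnnorm, ← ofReal_norm, hnx]; exact hrR
    have hnr : ‖(r : ℂ)‖ = r := by
      rw [Complex.norm_real, Real.norm_eq_abs, abs_of_pos hr]
    have hrcR : (‖(r : ℂ)‖₊ : ℝ≥0∞) < R := by
      rw [← enorm_eq_nnnorm, ← ofReal_norm, hnr]; exact hrR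
    have hQsym := hsymm (r : ℂ) hrc0 hrcR
    have hQtr := htr (r : ℂ) hrc0 hrcR
    by_cases hφ0 : φ = 0
    · subst hφ0
      rw [show ((r : ℂ)) * Complex.exp (((0 : ℝ) : ℂ) * Complex.I) = (r : ℂ) by
        simp]
      exact ⟨expand0 k (Q r) hQsym hQtr, rfl, rfl, rfl, rfl, rfl⟩
    · have hφpos : 0 < φ := lt_of_le_of_ne hφ.1 (Ne.symm hφ0)
      have hψmem : (2 * Real.pi - φ) ∈ Set.Ico (0 : ℝ) (2 * Real.pi) :=
        ⟨by linarith [hφ.2], by linarith⟩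
      have heq := h (2 * Real.pi - φ) hψmem ((r : ℂ) * Complex.exp ((φ : ℂ) * Complex.I))
        hx0 hxR
      have hP2 : P2 ((Rk 2 (2 * Real.pi - φ)).mulVec
          (toR3 ((r : ℂ) * Complex.exp ((φ : ℂ) * Complex.I)))) = (r : ℂ) := by
        rw [P2_rot]
        calc Complex.exp (((2 * Real.pi - φ : ℝ) : ℂ) * Complex.I)
              * ((r : ℂ) * Complex.exp ((φ : ℂ) * Complex.I))
            = (r : ℂ) * Complex.exp (((2 * Real.pi - φ : ℝ) : ℂ) * Complex.I
                + (φ : ℂ) * Complex.I) := by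
              rw [Complex.exp_add]; ring
          _ = (r : ℂ) * Complex.exp (2 * (Real.pi : ℂ) * Complex.I) := by
              congr 1
              rw [show ((2 * Real.pi - φ : ℝ) : ℂ) * Complex.I + (φ : ℂ) * Complex.I
                  = 2 * (Real.pi : ℂ) * Complex.I by push_cast; ring]
          _ = (r : ℂ) := by rw [Complex.exp_two_pi_mul_I, mul_one]
      rw [heq, hP2]
      have htp : (Rk k (2 * Real.pi - φ))ᵀ * Q (r : ℂ) * Rk k (2 * Real.pi - φ)
          = Rk k (-(2 * Real.pi - φ)) * Q (r : ℂ) * (Rk k (-(2 * Real.pi - φ)))ᵀ := by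
        rw [transpose_Rk k (2 * Real.pi - φ)]
        congr 1
        rw [transpose_Rk, neg_neg]
      rw [htp]
      have hφeq : φ = -(2 * Real.pi - φ) + 2 * Real.pi := by ring
      have he1 : E1 k φ = E1 k (-(2 * Real.pi - φ)) := by
        conv_lhs => rw [hφeq]
        rw [E1_per k hke]
      have he2 : E2 k φ = E2 k (-(2 * Real.pi - φ)) := by
        conv_lhs => rw [hφeq]
        rw [E2_per k hke]
      have he3 : E3m k φ = E3m k (-(2 * Real.pi - φ)) := by
        conv_lhs => rw [hφeq]
        rw [E3_per k hke]
      have he4 : E4m k φ = E4m k (-(2 * Real.pi - φ)) := by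
        conv_lhs => rw [hφeq]
        rw [E4_per k hke]
      have hc0 : Rk k (-(2 * Real.pi - φ)) * E0 * (Rk k (-(2 * Real.pi - φ)))ᵀ = E0 :=
        conj_E0 k _
      have hc1 : Rk k (-(2 * Real.pi - φ)) * E1 k 0 * (Rk k (-(2 * Real.pi - φ)))ᵀ
          = E1 k (-(2 * Real.pi - φ)) := by rw [conj_E1, zero_add]
      have hc2 : Rk k (-(2 * Real.pi - φ)) * E2 k 0 * (Rk k (-(2 * Real.pi - φ)))ᵀ
          = E2 k (-(2 * Real.pi - φ)) := by rw [conj_E2, zero_add]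
      have hc3 : Rk k (-(2 * Real.pi - φ)) * E3m k 0 * (Rk k (-(2 * Real.pi - φ)))ᵀ
          = E3m k (-(2 * Real.pi - φ)) := by rw [conj_E3, zero_add]
      have hc4 : Rk k (-(2 * Real.pi - φ)) * E4m k 0 * (Rk k (-(2 * Real.pi - φ)))ᵀ
          = E4m k (-(2 * Real.pi - φ)) := by rw [conj_E4, zero_add]
      refine ⟨?_, ?_, ?_, ?_, ?_, ?_⟩
      · rw [master k (Q (r : ℂ)) hQsym hQtr (-(2 * Real.pi - φ)), he1, he2, he3, he4]
      · conv_rhs => rw [← hc0]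
        rw [trace_conj]
      · conv_rhs => rw [he1, ← hc1]
        rw [trace_conj]
      · conv_rhs => rw [he2, ← hc2]
        rw [trace_conj]
      · conv_rhs => rw [he3, ← hc3]
        rw [trace_conj]
      · conv_rhs => rw [he4, ← hc4]
        rw [trace_conj]
  · rintro ⟨w0, w1, w2, w3, w4, hw⟩ ψ hψ x hx0 hxR
    have hr : 0 < ‖x‖ := norm_pos_iff.mpr hx0
    have hrR : ENNReal.ofReal (‖x‖) < R := by
      rw [ofReal_norm, enorm_eq_nnnorm]; exact hxR
    set φ : ℝ := if 0 ≤ x.arg then x.arg else x.arg + 2 * Real.pi with hφdef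
    have hφmem : φ ∈ Set.Ico (0 : ℝ) (2 * Real.pi) := by
      rw [hφdef]; split_ifs with h0
      · exact ⟨h0, lt_of_le_of_lt (Complex.arg_le_pi x) (by linarith [Real.pi_pos])⟩
      · push_neg at h0
        exact ⟨by linarith [Complex.neg_pi_lt_arg x, Real.pi_pos], by linarith [Real.pi_pos]⟩
    have hxeq : x = ((‖x‖ : ℝ) : ℂ) * Complex.exp ((φ : ℂ) * Complex.I) := by
      rw [hφdef]; split_ifs with h0
      · exact (Complex.norm_mul_exp_arg_mul_I x).symm
      · rw [show (((x.arg + 2 * Real.pi : ℝ)) : ℂ) * Complex.I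
            = (x.arg : ℂ) * Complex.I + 2 * (Real.pi : ℂ) * Complex.I by push_cast; ring,
          Complex.exp_add, Complex.exp_two_pi_mul_I, mul_one]
        exact (Complex.norm_mul_exp_arg_mul_I x).symm
    obtain ⟨hx_exp, -, -, -, -, -⟩ := hw (‖x‖) φ hr hrR hφmem
    have hrot : Complex.exp ((ψ : ℂ) * Complex.I) * x
        = ((‖x‖ : ℝ) : ℂ) * Complex.exp (((φ + ψ : ℝ) : ℂ) * Complex.I) := by
      conv_lhs => rw [hxeq]
      rw [show (((φ + ψ : ℝ)) : ℂ) * Complex.I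
          = (φ : ℂ) * Complex.I + (ψ : ℂ) * Complex.I by push_cast; ring, Complex.exp_add]
      ring
    by_cases hc : φ + ψ < 2 * Real.pi
    · obtain ⟨hx'_exp, -, -, -, -, -⟩ := hw (‖x‖) (φ + ψ) hr hrR
        ⟨add_nonneg hφmem.1 hψ.1, hc⟩
      have hP2 : P2 ((Rk 2 ψ).mulVec (toR3 x))
          = ((‖x‖ : ℝ) : ℂ) * Complex.exp (((φ + ψ : ℝ) : ℂ) * Complex.I) := by
        rw [P2_rot, hrot]
      rw [hP2, hx'_exp,
        show (Rk k ψ)ᵀ = Rk k (-ψ) from transpose_Rk k ψ,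
        show Rk k ψ = (Rk k (-ψ))ᵀ from by rw [transpose_Rk, neg_neg],
        conj_lincomb]
      conv_lhs => rw [hxeq, hx_exp]
      rw [show φ + ψ + -ψ = φ by ring]
    · push_neg at hc
      obtain ⟨hx'_exp, -, -, -, -, -⟩ := hw (‖x‖) (φ + ψ - 2 * Real.pi) hr hrR
        ⟨by linarith, by linarith [hφmem.2, hψ.2]⟩
      have hP2 : P2 ((Rk 2 ψ).mulVec (toR3 x))
          = ((‖x‖ : ℝ) : ℂ)
            * Complex.exp (((φ + ψ - 2 * Real.pi : ℝ) : ℂ) * Complex.I) := by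
        rw [P2_rot, hrot]
        congr 1
        rw [show (((φ + ψ : ℝ)) : ℂ) * Complex.I
            = ((φ + ψ - 2 * Real.pi : ℝ) : ℂ) * Complex.I
              + 2 * (Real.pi : ℂ) * Complex.I by push_cast; ring,
          Complex.exp_add, Complex.exp_two_pi_mul_I, mul_one]
      rw [hP2, hx'_exp,
        show (Rk k ψ)ᵀ = Rk k (-ψ) from transpose_Rk k ψ,
        show Rk k ψ = (Rk k (-ψ))ᵀ from by rw [transpose_Rk, neg_neg],
        conj_lincomb]
      conv_lhs => rw [hxeq, hx_exp]
      rw [show φ + ψ - 2 * Real.pi + -ψ = φ - 2 * Real.pi by ring]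
      have h1 : E1 k φ = E1 k (φ - 2 * Real.pi) := by
        conv_lhs => rw [show φ = φ - 2 * Real.pi + 2 * Real.pi by ring]
        rw [E1_per k hke]
      have h2 : E2 k φ = E2 k (φ - 2 * Real.pi) := by
        conv_lhs => rw [show φ = φ - 2 * Real.pi + 2 * Real.pi by ring]
        rw [E2_per k hke]
      have h3 : E3m k φ = E3m k (φ - 2 * Real.pi) := by
        conv_lhs => rw [show φ = φ - 2 * Real.pi + 2 * Real.pi by ring]
        rw [E3_per k hke]
      have h4 : E4m k φ = E4m k (φ - 2 * Real.pi) := by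
        conv_lhs => rw [show φ = φ - 2 * Real.pi + 2 * Real.pi by ring]
        rw [E4_per k hke]
      rw [h1, h2, h3, h4]

end LdGStmt0
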